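/- Corollary 2.4 (Choquet decomposition of the upper natural extension): Suppose Σ_{ω ∈ Ω} p̄(ω) ≥ 1. Let f be a gamble decomposed in terms of its level sets as f = Σ_{i=0}^{n} λ_i I_{A_i}, where λ_0 ∈ ℝ, λ_1, …, λ_n > 0, and Ω = A_0 ⊋ A_1 ⊋ ⋯ ⊋ A_n ≠ ∅. Then Ē_{p̄}(f) = Σ_{i=0}^{n} λ_i Ē_{p̄}(A_i). -/

import Mathlib

open Finset

/-- The upper natural extension of a gamble `f` with respect to the upper
probability mass function `pbar`. -/
noncomputable def upperExt {Ω : Type*} [Fintype Ω] [DecidableEq Ω]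
    (pbar f : Ω → ℝ) : ℝ :=
  sInf {β : ℝ | ∃ lam : Ω → ℝ, (∀ ω, 0 ≤ lam ω) ∧
    ∀ ω' : Ω, ∑ ω : Ω, lam ω * (pbar ω - (if ω' = ω then (1 : ℝ) else 0)) ≤ β - f ω'}

lemma sum_lam_simp {Ω : Type*} [Fintype Ω] [DecidableEq Ω] (lam pbar : Ω → ℝ) (ω' : Ω) :
    ∑ ω : Ω, lam ω * (pbar ω - (if ω' = ω then (1:ℝ) else 0))
      = (∑ ω : Ω, lam ω * pbar ω) - lam ω' := by
  simp [mul_sub, Finset.sum_sub_distrib, mul_ite]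

/-- If there is a dominated "probability mass" `q` whose expectation of `g`
equals `β`, and `β` is feasible, then the upper natural extension of `g` is `β`. -/
lemma upperExt_eq_of {Ω : Type*} [Fintype Ω] [DecidableEq Ω]
    {pbar : Ω → ℝ} (q : Ω → ℝ) (hq0 : ∀ ω, 0 ≤ q ω)
    (hqle : ∀ ω, q ω ≤ pbar ω) (hq1 : ∑ ω : Ω, q ω = 1)
    (g : Ω → ℝ) (β : ℝ)
    (hfeas : ∃ lam : Ω → ℝ, (∀ ω, 0 ≤ lam ω) ∧
      ∀ ω' : Ω, (∑ ω : Ω, lam ω * pbar ω) - lam ω' ≤ β - g ω')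
    (hval : ∑ ω : Ω, q ω * g ω = β) :
    upperExt pbar g = β := by
  have hlb : ∀ b ∈ {β : ℝ | ∃ lam : Ω → ℝ, (∀ ω, 0 ≤ lam ω) ∧
      ∀ ω' : Ω, ∑ ω : Ω, lam ω * (pbar ω - (if ω' = ω then (1 : ℝ) else 0)) ≤ b - g ω'},
      β ≤ b := by
    rintro b ⟨lam, hlam0, hlam⟩
    simp only [sum_lam_simp] at hlam
    set T : ℝ := ∑ ω : Ω, lam ω * pbar ω with hT
    have h1 : ∑ ω : Ω, q ω * g ω ≤ ∑ ω : Ω, q ω * (b - T + lam ω) := by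
      apply Finset.sum_le_sum
      intro ω _
      exact mul_le_mul_of_nonneg_left (by linarith [hlam ω]) (hq0 ω)
    have h2 : ∑ ω : Ω, q ω * (b - T + lam ω)
        = (b - T) * (∑ ω : Ω, q ω) + ∑ ω : Ω, q ω * lam ω := by
      rw [Finset.mul_sum, ← Finset.sum_add_distrib]
      exact Finset.sum_congr rfl (fun ω _ => by ring)
    have h3 : ∑ ω : Ω, q ω * lam ω ≤ T := by
      rw [hT]
      apply Finset.sum_le_sum
      intro ω _
      calc q ω * lam ω = lam ω * q ω := by ring
        _ ≤ lam ω * pbar ω := mul_le_mul_of_nonneg_left (hqle ω) (hlam0 ω)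
    rw [hq1] at h2
    linarith [hval ▸ (h2 ▸ h1)]
  obtain ⟨lam, hlam0, hlam⟩ := hfeas
  have hmem : β ∈ {β : ℝ | ∃ lam : Ω → ℝ, (∀ ω, 0 ≤ lam ω) ∧
      ∀ ω' : Ω, ∑ ω : Ω, lam ω * (pbar ω - (if ω' = ω then (1 : ℝ) else 0)) ≤ β - g ω'} :=
    ⟨lam, hlam0, fun ω' => by rw [sum_lam_simp]; exact hlam ω'⟩
  exact le_antisymm (csInf_le ⟨β, hlb⟩ hmem) (le_csInf ⟨β, hmem⟩ hlb)

/-- Corollary 2.4: Choquet decomposition of the upper natural extension in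
terms of the level sets of `f`. -/
theorem upperExt_levelSet_decomposition
    {Ω : Type*} [Fintype Ω] [Nonempty Ω] [DecidableEq Ω]
    (pbar : Ω → ℝ) (hpbar : ∀ ω, 0 ≤ pbar ω ∧ pbar ω ≤ 1)
    (hasl : 1 ≤ ∑ ω : Ω, pbar ω)
    (n : ℕ) (lam : ℕ → ℝ) (A : ℕ → Finset Ω)
    (hA0 : A 0 = Finset.univ)
    (hchain : ∀ i < n, A (i + 1) ⊂ A i)
    (hAn : (A n).Nonempty)
    (hlam : ∀ i, 1 ≤ i → i ≤ n → 0 < lam i)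
    (f : Ω → ℝ)
    (hf : ∀ ω, f ω = ∑ i ∈ Finset.range (n + 1),
      lam i * (if ω ∈ A i then (1 : ℝ) else 0)) :
    upperExt pbar f = ∑ i ∈ Finset.range (n + 1),
      lam i * upperExt pbar (fun ω => if ω ∈ A i then (1 : ℝ) else 0) := by
  classical
  set S : Finset Ω → ℝ := fun X => ∑ ω ∈ X, pbar ω with hSdef
  have hSmono : ∀ X Y : Finset Ω, X ⊆ Y → S X ≤ S Y := fun X Y h =>
    Finset.sum_le_sum_of_subset_of_nonneg h (fun ω _ _ => (hpbar ω).1)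
  have hsub : ∀ j, j ≤ n → ∀ i, i ≤ j → A j ⊆ A i := by
    intro j hj
    induction j with
    | zero => intro i hi; simp [Nat.le_zero.mp hi]
    | succ m ih =>
      intro i hi
      rcases Nat.lt_or_ge i (m+1) with h | h
      · exact subset_trans (hchain m (by omega)).subset (ih (by omega) i (by omega))
      · have : i = m+1 := by omega
        simp [this]
  have hSA0 : S (A 0) = ∑ ω : Ω, pbar ω := by rw [hSdef]; simp [hA0]
  set k : ℕ := Nat.findGreatest (fun i => 1 ≤ S (A i)) n with hkdef
  have hk_le : k ≤ n := Nat.findGreatest_le n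
  have hk1 : 1 ≤ S (A k) :=
    Nat.findGreatest_spec (P := fun i => 1 ≤ S (A i)) (Nat.zero_le n)
      (by show 1 ≤ S (A 0); rw [hSA0]; exact hasl)
  have hk_max : ∀ j, k < j → j ≤ n → S (A j) < 1 := by
    intro j h1 h2
    have := Nat.findGreatest_is_greatest (P := fun i => 1 ≤ S (A i)) h1 h2
    linarith [not_le.mp this]
  set B : Finset Ω := if h : k < n then A (k+1) else ∅ with hBdef
  have hB_lt : S B < 1 := by
    by_cases h : k < n
    · rw [hBdef]; simp only [dif_pos h]; exact hk_max (k+1) (by omega) (by omega)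
    · rw [hBdef]; simp only [dif_neg h]; simp [hSdef]
  have hB_sub : B ⊆ A k := by
    by_cases h : k < n
    · rw [hBdef]; simp only [dif_pos h]; exact (hchain k h).subset
    · rw [hBdef]; simp only [dif_neg h]; exact Finset.empty_subset _
  have hB_top : ∀ i, k < i → i ≤ n → A i ⊆ B := by
    intro i h1 h2
    have h : k < n := by omega
    rw [hBdef]; simp only [dif_pos h]
    exact hsub i h2 (k+1) (by omega)
  have hd : 0 < S (A k) - S B := by linarith
  set c : ℝ := (1 - S B) / (S (A k) - S B) with hcdef
  have hc0 : 0 ≤ c := div_nonneg (by linarith) (le_of_lt hd)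
  have hc1 : c ≤ 1 := (div_le_one hd).mpr (by linarith)
  set q : Ω → ℝ := fun ω => if ω ∈ B then pbar ω else if ω ∈ A k then c * pbar ω else 0
    with hqdef
  have hq0 : ∀ ω, 0 ≤ q ω := by
    intro ω; rw [hqdef]; dsimp only
    split_ifs with h1 h2
    · exact (hpbar ω).1
    · exact mul_nonneg hc0 (hpbar ω).1
    · exact le_refl 0
  have hqle : ∀ ω, q ω ≤ pbar ω := by
    intro ω; rw [hqdef]; dsimp only
    split_ifs with h1 h2
    · exact le_refl _
    · calc c * pbar ω ≤ 1 * pbar ω := mul_le_mul_of_nonneg_right hc1 (hpbar ω).1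
        _ = pbar ω := one_mul _
    · exact (hpbar ω).1
  have hqsplit : ∀ ω, q ω = (if ω ∈ B then (1 - c) * pbar ω else 0)
      + (if ω ∈ A k then c * pbar ω else 0) := by
    intro ω; rw [hqdef]; dsimp only
    by_cases h1 : ω ∈ B
    · have h2 : ω ∈ A k := hB_sub h1
      simp [h1, h2]; ring
    · simp [h1]
  have hmul : c * (S (A k) - S B) = 1 - S B := by
    rw [hcdef]; field_simp
  have hq_total : ∑ ω : Ω, q ω = 1 := by
    have h : ∑ ω : Ω, q ω = (1 - c) * S B + c * S (A k) := by
      simp only [hqsplit]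
      rw [Finset.sum_add_distrib]
      congr 1
      · simp [hSdef, Finset.sum_ite_mem, Finset.mul_sum]
      · simp [hSdef, Finset.sum_ite_mem, Finset.mul_sum]
    rw [h]
    linear_combination hmul
  have hq_sup : ∀ X : Finset Ω, A k ⊆ X → ∑ ω ∈ X, q ω = 1 := by
    intro X hX
    rw [← hq_total]
    apply Finset.sum_subset (Finset.subset_univ X)
    intro ω _ hω
    have h1 : ω ∉ A k := fun h => hω (hX h)
    have h2 : ω ∉ B := fun h => h1 (hB_sub h)
    rw [hqdef]; dsimp only; rw [if_neg h2, if_neg h1]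
  have hq_subB : ∀ X : Finset Ω, X ⊆ B → ∑ ω ∈ X, q ω = S X := by
    intro X hX
    apply Finset.sum_congr rfl
    intro ω hω
    rw [hqdef]; dsimp only; rw [if_pos (hX hω)]
  have hind : ∀ X : Finset Ω, ∑ ω : Ω, q ω * (if ω ∈ X then (1:ℝ) else 0)
      = ∑ ω ∈ X, q ω := by
    intro X
    simp [mul_ite, Finset.sum_ite_mem]
  have hqA : ∀ i, i ≤ n →
      ∑ ω : Ω, q ω * (if ω ∈ A i then (1:ℝ) else 0) = min 1 (S (A i)) := by
    intro i hi
    rw [hind]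
    rcases le_or_gt i k with h | h
    · rw [hq_sup _ (hsub k hk_le i h)]
      have : 1 ≤ S (A i) := le_trans hk1 (hSmono _ _ (hsub k hk_le i h))
      rw [min_eq_left this]
    · rw [hq_subB _ (hB_top i h hi)]
      have : S (A i) < 1 := lt_of_le_of_lt (hSmono _ _ (hB_top i h hi)) hB_lt
      rw [min_eq_right this.le]
  -- the upper extension of each indicator
  have hupperInd : ∀ i, i ≤ n →
      upperExt pbar (fun ω => if ω ∈ A i then (1:ℝ) else 0) = min 1 (S (A i)) := by
    intro i hi
    apply upperExt_eq_of q hq0 hqle hq_total _ _ ?_ (hqA i hi)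
    by_cases hS1 : S (A i) ≤ 1
    · refine ⟨fun ω => if ω ∈ A i then 1 else 0,
        fun ω => by by_cases h : ω ∈ A i <;> simp [h], ?_⟩
      have hsum : ∑ ω : Ω, (if ω ∈ A i then (1:ℝ) else 0) * pbar ω = S (A i) := by
        simp [ite_mul, Finset.sum_ite_mem, hSdef]
      intro ω'
      rw [hsum, min_eq_right hS1]
    · refine ⟨fun _ => 0, fun ω => le_refl 0, ?_⟩
      intro ω'
      rw [min_eq_left (by linarith)]
      simp only [zero_mul, Finset.sum_const_zero, sub_zero]
      by_cases h : ω' ∈ A i <;> simp [h]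
  -- feasibility for f
  set P : ℕ → Prop := fun i => 1 ≤ i ∧ S (A i) ≤ 1 with hPdef
  set μ : Ω → ℝ := fun ω => ∑ i ∈ Finset.range (n+1),
    if P i ∧ ω ∈ A i then lam i else 0 with hμdef
  have hμ0 : ∀ ω, 0 ≤ μ ω := by
    intro ω; rw [hμdef]; dsimp only
    apply Finset.sum_nonneg
    intro i hi
    have hin : i ≤ n := Nat.lt_succ_iff.mp (Finset.mem_range.mp hi)
    split_ifs with h
    · exact (hlam i h.1.1 hin).le
    · exact le_refl 0
  have hμsum : ∑ ω : Ω, μ ω * pbar ω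
      = ∑ i ∈ Finset.range (n+1), (if P i then lam i * S (A i) else 0) := by
    rw [hμdef]
    dsimp only
    simp_rw [Finset.sum_mul]
    rw [Finset.sum_comm]
    apply Finset.sum_congr rfl
    intro i _
    by_cases hP : P i
    · have h1 : ∀ x : Ω, (if P i ∧ x ∈ A i then lam i else 0) * pbar x
          = (if x ∈ A i then lam i * pbar x else 0) := by
        intro x
        by_cases h : x ∈ A i
        · rw [if_pos ⟨hP, h⟩, if_pos h]
        · rw [if_neg (fun hc => h hc.2), if_neg h, zero_mul]
      rw [if_pos hP]
      simp_rw [h1]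
      simp [Finset.sum_ite_mem, hSdef, Finset.mul_sum]
    · simp [hP]
  set β : ℝ := ∑ i ∈ Finset.range (n+1), lam i * min 1 (S (A i)) with hβdef
  have hfeasf : ∀ ω' : Ω, (∑ ω : Ω, μ ω * pbar ω) - μ ω' ≤ β - f ω' := by
    intro ω'
    have hterm : ∀ i ∈ Finset.range (n+1),
        (if P i then lam i * S (A i) else 0) - (if P i ∧ ω' ∈ A i then lam i else 0)
          + lam i * (if ω' ∈ A i then (1:ℝ) else 0) ≤ lam i * min 1 (S (A i)) := by
      intro i hi
      have hin : i ≤ n := by simp at hi; omega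
      by_cases hP : P i
      · rw [if_pos hP, min_eq_right hP.2]
        by_cases h : ω' ∈ A i
        · rw [if_pos ⟨hP, h⟩, if_pos h]
          exact le_of_eq (by ring)
        · rw [if_neg (by tauto), if_neg h]
          exact le_of_eq (by ring)
      · rw [if_neg hP, if_neg (by tauto)]
        by_cases hi1 : 1 ≤ i
        · have hS1 : 1 < S (A i) := by
            by_contra hcon
            exact hP ⟨hi1, le_of_not_gt hcon⟩
          rw [min_eq_left hS1.le]
          have hl := hlam i hi1 hin
          by_cases h : ω' ∈ A i <;> simp [h] <;> nlinarith
        · have hi0 : i = 0 := by omega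
          subst hi0
          rw [min_eq_left (hSA0 ▸ hasl)]
          simp [hA0]
    have hcomb := Finset.sum_le_sum hterm
    simp only [Finset.sum_add_distrib, Finset.sum_sub_distrib] at hcomb
    rw [hμsum, hf ω', hβdef, hμdef]
    dsimp only
    linarith
  have hvalf : ∑ ω : Ω, q ω * f ω = β := by
    have h1 : ∑ ω : Ω, q ω * f ω
        = ∑ i ∈ Finset.range (n+1), ∑ ω : Ω, q ω * (lam i * (if ω ∈ A i then (1:ℝ) else 0)) := by
      simp_rw [hf, Finset.mul_sum]
      rw [Finset.sum_comm]
    rw [h1, hβdef]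
    apply Finset.sum_congr rfl
    intro i hi
    have hin : i ≤ n := by simp at hi; omega
    rw [← hqA i hin, Finset.mul_sum]
    apply Finset.sum_congr rfl
    intro ω _
    ring
  have hEf : upperExt pbar f = β :=
    upperExt_eq_of q hq0 hqle hq_total f β ⟨μ, hμ0, hfeasf⟩ hvalf
  rw [hEf, hβdef]
  apply Finset.sum_congr rfl
  intro i hi
  have hin : i ≤ n := by simp at hi; omega
  rw [hupperInd i hin]
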